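/- Fix an integer n ≥ 2 and complex numbers q, p, κ with q ≠ 0, κ ≠ 0 and 0 < |p| < 1. Fix branches by q^z = exp(z·Log q) and p^z = exp(z·Log p), and define Γ_p(x) = (1 − p)^{1−x} · ∏_{k=0}^{∞} (1 − p^{k+1})/(1 − p^{x+k}) (the infinite product converges whenever p^{x+k} ≠ 1 for all k ≥ 0). For λ ∈ ℂⁿ write λ_{l,m} = λ_l − λ_m. Define the multiplicative 1-forms ξ_j(λ) = ∏_{i<j} q^{λ_i}, η_j(λ) = ∏_{i<j} Γ_p((λ_{i,j} + 1)/κ)⁻¹, ζ_j(λ) = ∏_{i<j} Γ_p(1 + λ_{j,i}/κ)⁻¹, and for m < l define σ_{l,m}(λ) = q · [Γ_p(1 + λ_{l,m}/κ + 1/κ)/Γ_p(1 + λ_{l,m}/κ)] · [Γ_p(−λ_{l,m}/κ)/Γ_p(−λ_{l,m}/κ + 1/κ)], with σ_{m,l}(λ) = σ_{l,m}(λ)⁻¹. Then the multiplicative 2-form (i, j) ↦ σ_{j,i} is exact with step 1: for all i ≠ j and all λ ∈ ℂⁿ at which all the quantities above are defined and nonzero, (d₁(ξηζ))_{i,j}(λ)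 = σ_{j,i}(λ), where ξηζ is the pointwise product 1-form, (d₁ψ)_{a,b} = (δ_a ψ_b)·(δ_b ψ_a)⁻¹, and (δ_s f)(λ) = f(λ)·f(λ − e_s)⁻¹. Consequently, for any γ ∈ ℂ with γ ≠ 0 and any fixed ρ ∈ ℂⁿ, the 2-form φ_{i,j}(λ) = σ_{j,i}(λ/γ − ρ) is γ-exact. -/

import Mathlib

/-- Points of the dynamical parameter space `ℂⁿ`. -/
abbrev Wt (n : ℕ) : Type := Fin n → ℂ

noncomputable section

/-- The `s`-th standard basis vector `e_s` of `ℂⁿ`. -/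
def eps (n : ℕ) (s : Fin n) : Wt n := Pi.single s 1

/-- The q-Gamma function with base `p`:
`Γ_p(x) = (1 − p)^{1−x} · ∏_{k=0}^{∞} (1 − p^{k+1})/(1 − p^{x+k})`,
complex powers being taken with the principal branch `a^z = exp(z·Log a)`. -/
def qGamma (p x : ℂ) : ℂ :=
  (1 - p) ^ (1 - x) * ∏' k : ℕ, (1 - p ^ ((k : ℂ) + 1)) / (1 - p ^ (x + (k : ℂ)))

/-- The multiplicative difference operator `(δ_s f)(λ) = f(λ)·f(λ − γe_s)⁻¹`
on `ℂ`-valued functions. -/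
def cdelta (n : ℕ) (γ : ℂ) (s : Fin n) (f : Wt n → ℂ) (lam : Wt n) : ℂ :=
  f lam * (f (lam - γ • eps n s))⁻¹

/-- The differential of a multiplicative 1-form with step `γ`:
`(d_γψ)_{a,b} = (δ_a ψ_b)·(δ_b ψ_a)⁻¹`. -/
def oneFormDiff (n : ℕ) (γ : ℂ) (ψ : Fin n → Wt n → ℂ) (a b : Fin n)
    (lam : Wt n) : ℂ :=
  cdelta n γ a (ψ b) lam * (cdelta n γ b (ψ a) lam)⁻¹

/-- The 1-form `ξ_j(λ) = ∏_{i<j} q^{λ_i}`. -/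
def xiForm (n : ℕ) (q : ℂ) (j : Fin n) (lam : Wt n) : ℂ :=
  ∏ i ∈ Finset.univ.filter (fun i : Fin n => i < j), q ^ lam i

/-- The 1-form `η_j(λ) = ∏_{i<j} Γ_p((λ_{i,j} + 1)/κ)⁻¹`. -/
def etaForm (n : ℕ) (p κ : ℂ) (j : Fin n) (lam : Wt n) : ℂ :=
  ∏ i ∈ Finset.univ.filter (fun i : Fin n => i < j),
    (qGamma p ((lam i - lam j + 1) / κ))⁻¹

/-- The 1-form `ζ_j(λ) = ∏_{i<j} Γ_p(1 + λ_{j,i}/κ)⁻¹`. -/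
def zetaForm (n : ℕ) (p κ : ℂ) (j : Fin n) (lam : Wt n) : ℂ :=
  ∏ i ∈ Finset.univ.filter (fun i : Fin n => i < j),
    (qGamma p (1 + (lam j - lam i) / κ))⁻¹

/-- For `m < l`, the gauge coefficient
`σ_{l,m}(λ) = q·[Γ_p(1+λ_{l,m}/κ+1/κ)/Γ_p(1+λ_{l,m}/κ)]·[Γ_p(−λ_{l,m}/κ)/Γ_p(−λ_{l,m}/κ+1/κ)]`. -/
def sigmaBase (n : ℕ) (q p κ : ℂ) (l m : Fin n) (lam : Wt n) : ℂ :=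
  q * (qGamma p (1 + (lam l - lam m) / κ + 1 / κ) /
        qGamma p (1 + (lam l - lam m) / κ)) *
    (qGamma p (-(lam l - lam m) / κ) / qGamma p (-(lam l - lam m) / κ + 1 / κ))

/-- The full family `σ_{l,m}`, with `σ_{m,l} = σ_{l,m}⁻¹` for `m < l`. -/
def sigmaForm (n : ℕ) (q p κ : ℂ) (l m : Fin n) (lam : Wt n) : ℂ :=
  if m < l then sigmaBase n q p κ l m lam else (sigmaBase n q p κ m l lam)⁻¹

/-- Regularity of the base point `lam` (relative to the directions `i`, `j`,
with step 1): every q-Gamma value occurring in the 1-forms `η`, `ζ` and in the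
coefficients `σ` at the points `lam`, `lam − e_i`, `lam − e_j` is defined and
nonzero. -/
def GoodPt (n : ℕ) (p κ : ℂ) (i j : Fin n) (lam : Wt n) : Prop :=
  ∀ a b : Fin n, ∀ μ : Wt n,
    (μ = lam ∨ μ = lam - eps n i ∨ μ = lam - eps n j) →
      qGamma p ((μ a - μ b + 1) / κ) ≠ 0 ∧
      qGamma p (1 + (μ a - μ b) / κ) ≠ 0 ∧
      qGamma p (-(μ a - μ b) / κ) ≠ 0 ∧
      qGamma p (-(μ a - μ b) / κ + 1 / κ) ≠ 0 ∧
      qGamma p (1 + (μ a - μ b) / κ + 1 / κ) ≠ 0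

section Aux

variable {n : ℕ}

lemma shift_apply (γ : ℂ) (s t : Fin n) (lam : Wt n) :
    (lam - γ • eps n s) t = lam t - γ * (if t = s then 1 else 0) := by
  simp [eps, Pi.single_apply, mul_ite]

lemma shift_ne (γ : ℂ) {s t : Fin n} (h : t ≠ s) (lam : Wt n) :
    (lam - γ • eps n s) t = lam t := by
  simp [eps, Pi.single_eq_of_ne h]

lemma shift_self (γ : ℂ) (s : Fin n) (lam : Wt n) :
    (lam - γ • eps n s) s = lam s - γ := by
  simp [eps]

/-- The `i`-th factor of the 1-form `ψ_l = ξ_l η_l ζ_l`. -/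
def psiF (q p κ : ℂ) (l i : Fin n) (mu : Wt n) : ℂ :=
  q ^ mu i * (qGamma p ((mu i - mu l + 1) / κ))⁻¹ *
    (qGamma p (1 + (mu l - mu i) / κ))⁻¹

lemma psi_prod (q p κ : ℂ) (l : Fin n) (mu : Wt n) :
    xiForm n q l mu * etaForm n p κ l mu * zetaForm n p κ l mu
      = ∏ i ∈ Finset.univ.filter (fun i : Fin n => i < l), psiF q p κ l i mu := by
  rw [xiForm, etaForm, zetaForm, ← Finset.prod_mul_distrib, ← Finset.prod_mul_distrib]
  rfl

lemma psiF_ne_zero {q : ℂ} (p κ : ℂ) (hq : q ≠ 0) {l i : Fin n} {mu : Wt n}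
    (h1 : qGamma p ((mu i - mu l + 1) / κ) ≠ 0)
    (h2 : qGamma p (1 + (mu l - mu i) / κ) ≠ 0) :
    psiF q p κ l i mu ≠ 0 := by
  refine mul_ne_zero (mul_ne_zero ?_ (inv_ne_zero h1)) (inv_ne_zero h2)
  simp [Complex.cpow_eq_zero_iff, hq]

/-- `δ_m ψ_l = σ_{l,m}` for `m < l`. -/
lemma delta_lt (q p κ : ℂ) (hq : q ≠ 0) {m l : Fin n} (hml : m < l) (lam : Wt n)
    (H : ∀ i : Fin n, i < l →
      qGamma p ((lam i - lam l + 1) / κ) ≠ 0 ∧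
      qGamma p (1 + (lam l - lam i) / κ) ≠ 0) :
    cdelta n 1 m
        (fun mu => xiForm n q l mu * etaForm n p κ l mu * zetaForm n p κ l mu) lam
      = sigmaBase n q p κ l m lam := by
  have hlm : l ≠ m := hml.ne'
  rw [cdelta, psi_prod, psi_prod, ← Finset.prod_inv_distrib, ← Finset.prod_mul_distrib,
    Finset.prod_eq_single_of_mem m (by simp [hml])]
  · -- the factor at `i = m`
    have e1 : q ^ lam m * (q ^ (lam m - 1))⁻¹ = q := by
      have hne : q ^ (lam m - 1) ≠ 0 := by simp [Complex.cpow_eq_zero_iff, hq]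
      rw [show lam m = (lam m - 1) + 1 by ring, Complex.cpow_add _ _ hq, Complex.cpow_one]
      field_simp
      rw [show lam m - 1 + 1 - 1 = lam m - 1 by ring, div_self hne]
    simp only [psiF, shift_self, shift_ne (1 : ℂ) hlm]
    rw [show (lam m - 1 - lam l + 1) / κ = -(lam l - lam m) / κ by ring,
      show (lam m - lam l + 1) / κ = -(lam l - lam m) / κ + 1 / κ by ring,
      show 1 + (lam l - (lam m - 1)) / κ = 1 + (lam l - lam m) / κ + 1 / κ by ring,
      sigmaBase]
    have h2 := (H m hml).2
    simp only [mul_inv, inv_inv]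
    linear_combination
      (qGamma p (-(lam l - lam m) / κ + 1 / κ))⁻¹ * (qGamma p (1 + (lam l - lam m) / κ))⁻¹ *
        qGamma p (-(lam l - lam m) / κ) * qGamma p (1 + (lam l - lam m) / κ + 1 / κ) * e1
  · -- all other factors are `1`
    intro i hi hne
    have hil : i < l := by simpa using hi
    rw [show psiF q p κ l i (lam - (1 : ℂ) • eps n m) = psiF q p κ l i lam by
      simp only [psiF, shift_ne (1 : ℂ) hne, shift_ne (1 : ℂ) hlm]]
    exact mul_inv_cancel₀ (psiF_ne_zero p κ hq (H i hil).1 (H i hil).2)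

/-- `δ_l ψ_m = 1` for `m < l`. -/
lemma delta_gt (q p κ : ℂ) (hq : q ≠ 0) {m l : Fin n} (hml : m < l) (lam : Wt n)
    (H : ∀ i : Fin n, i < m →
      qGamma p ((lam i - lam m + 1) / κ) ≠ 0 ∧
      qGamma p (1 + (lam m - lam i) / κ) ≠ 0) :
    cdelta n 1 l
        (fun mu => xiForm n q m mu * etaForm n p κ m mu * zetaForm n p κ m mu) lam
      = 1 := by
  rw [cdelta, psi_prod, psi_prod, ← Finset.prod_inv_distrib, ← Finset.prod_mul_distrib]
  apply Finset.prod_eq_one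
  intro i hi
  have him : i < m := by simpa using hi
  have hil : i ≠ l := (him.trans hml).ne
  have hmlne : m ≠ l := hml.ne
  rw [show psiF q p κ m i (lam - (1 : ℂ) • eps n l) = psiF q p κ m i lam by
    simp only [psiF, shift_ne (1 : ℂ) hil, shift_ne (1 : ℂ) hmlne]]
  exact mul_inv_cancel₀ (psiF_ne_zero p κ hq (H i him).1 (H i him).2)

end Aux

/-- Lemma 3 of the paper.  For `n ≥ 2`, `q ≠ 0`, `κ ≠ 0`,
`0 < |p| < 1`, the multiplicative 2-form `(i, j) ↦ σ_{j,i}` is exact with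
step 1: `(d₁(ξηζ))_{i,j}(λ) = σ_{j,i}(λ)` at every regular point `λ`.
Consequently, for any `γ ≠ 0` and any fixed `ρ ∈ ℂⁿ`, the 2-form
`φ_{i,j}(λ) = σ_{j,i}(λ/γ − ρ)` is `γ`-exact. -/
theorem sigma_two_form_exact (n : ℕ) (hn : 2 ≤ n) (q p κ : ℂ)
    (hq : q ≠ 0) (hκ : κ ≠ 0) (hp0 : 0 < ‖p‖) (hp1 : ‖p‖ < 1) :
    (∀ i j : Fin n, i ≠ j → ∀ lam : Wt n, GoodPt n p κ i j lam →
      oneFormDiff n 1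
          (fun a mu => xiForm n q a mu * etaForm n p κ a mu * zetaForm n p κ a mu)
          i j lam
        = sigmaForm n q p κ j i lam) ∧
    (∀ γ : ℂ, γ ≠ 0 → ∀ ρ : Wt n, ∃ ψ : Fin n → Wt n → ℂ,
      ∀ i j : Fin n, i ≠ j → ∀ lam : Wt n,
        GoodPt n p κ i j (γ⁻¹ • lam - ρ) →
          oneFormDiff n γ ψ i j lam = sigmaForm n q p κ j i (γ⁻¹ • lam - ρ)) := by
  have part1 : ∀ i j : Fin n, i ≠ j → ∀ lam : Wt n, GoodPt n p κ i j lam →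
      oneFormDiff n 1
          (fun a mu => xiForm n q a mu * etaForm n p κ a mu * zetaForm n p κ a mu)
          i j lam
        = sigmaForm n q p κ j i lam := by
    intro i j hij lam hG
    have HG : ∀ a b : Fin n,
        qGamma p ((lam a - lam b + 1) / κ) ≠ 0 ∧
        qGamma p (1 + (lam a - lam b) / κ) ≠ 0 := fun a b =>
      ⟨(hG a b lam (Or.inl rfl)).1, (hG a b lam (Or.inl rfl)).2.1⟩
    rw [oneFormDiff]
    rcases hij.lt_or_gt with h | h
    · rw [delta_lt q p κ hq h lam (fun a ha => ⟨(HG a j).1, (HG j a).2⟩),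
        delta_gt q p κ hq h lam (fun a ha => ⟨(HG a i).1, (HG i a).2⟩),
        inv_one, mul_one, sigmaForm, if_pos h]
    · rw [delta_lt q p κ hq h lam (fun a ha => ⟨(HG a i).1, (HG i a).2⟩),
        delta_gt q p κ hq h lam (fun a ha => ⟨(HG a j).1, (HG j a).2⟩),
        one_mul, sigmaForm, if_neg (not_lt.mpr h.le)]
  refine ⟨part1, ?_⟩
  intro γ hγ ρ
  refine ⟨fun a mu =>
    xiForm n q a (γ⁻¹ • mu - ρ) * etaForm n p κ a (γ⁻¹ • mu - ρ) *
      zetaForm n p κ a (γ⁻¹ • mu - ρ), ?_⟩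
  intro i j hij lam hG
  have key : ∀ s : Fin n,
      γ⁻¹ • (lam - γ • eps n s) - ρ = (γ⁻¹ • lam - ρ) - (1 : ℂ) • eps n s := by
    intro s
    funext t
    simp only [Pi.sub_apply, Pi.smul_apply, smul_eq_mul]
    field_simp
    ring
  have := part1 i j hij (γ⁻¹ • lam - ρ) hG
  rw [← this]
  simp only [oneFormDiff, cdelta, key]
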